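/- Let f : ℝ^d → ℝ be convex, twice continuously differentiable, attain its minimum f⋆, be L-smooth (∇²f(x) ⪯ L·I for all x), and have M-Lipschitz Hessian (|uᵀ(∇²f(x) − ∇²f(y))u| ≤ M‖x−y‖‖u‖² for all x, y, u). Fix x ∈ ℝ^d, a unit vector u, R > 0, and set B = max(LR², MR³, f(x) − f⋆). Let d₀ = uᵀ∇f(x), h₀ = uᵀ∇²f(x)u, and for 0 < r ≤ R let d_r = d_r(x;u), h_r = h_r(x;u) be the central finite differences. Let P(α) = d₀α + (h₀/2)α² + (M/6)|α|³, let α̂ = φ(d₀, h₀) be its global minimizer, and let α⁺ = φ(d_r, h_r), α⁻ = φ(−d_r, h_r), where φ(d,h) = −2d/(h + √(h² + 2M|d|)) (with φ(0,0) = 0). Then min(|P(α̂) − P(α⁺)|, |P(α̂) − P(α⁻)|) ≤ (2B/R²)·r². -/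

import Mathlib

open scoped RealInnerProductSpace

/-- The one-dimensional cubic-regularized second-order model
`P(α; d, h) = d·α + (h/2)·α² + (M/6)·|α|³`. -/
noncomputable def cubicModel (M d h α : ℝ) : ℝ :=
  d * α + h / 2 * α ^ 2 + M / 6 * |α| ^ 3

/-- The global minimizer `φ(d, h) = −2d/(h + √(h² + 2M|d|))` of the cubic model
(understood as `0` when `d = 0` and `h = 0`). -/
noncomputable def cubicMin (M d h : ℝ) : ℝ :=
  -2 * d / (h + Real.sqrt (h ^ 2 + 2 * M * |d|))

/-- First-order central finite difference `d_r(x;u) = (f(x+ru) − f(x−ru))/(2r)`. -/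
noncomputable def centralD {n : ℕ} (f : EuclideanSpace ℝ (Fin n) → ℝ)
    (x u : EuclideanSpace ℝ (Fin n)) (r : ℝ) : ℝ :=
  (f (x + r • u) - f (x - r • u)) / (2 * r)

/-- Second-order central finite difference `h_r(x;u) = (f(x+ru) − 2f(x) + f(x−ru))/r²`. -/
noncomputable def centralH {n : ℕ} (f : EuclideanSpace ℝ (Fin n) → ℝ)
    (x u : EuclideanSpace ℝ (Fin n)) (r : ℝ) : ℝ :=
  (f (x + r • u) - 2 * f x + f (x - r • u)) / r ^ 2


noncomputable def tmin (M D h : ℝ) : ℝ := 2 * D / (h + Real.sqrt (h ^ 2 + 2 * M * D))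

lemma tmin_nonneg {M D h : ℝ} (hD : 0 ≤ D) (hh : 0 ≤ h) : 0 ≤ tmin M D h := by
  unfold tmin
  apply div_nonneg (by linarith)
  positivity

lemma tmin_eq {M D h : ℝ} (hM : 0 < M) (hD : 0 ≤ D) (hh : 0 ≤ h) :
    M / 2 * (tmin M D h) ^ 2 + h * tmin M D h = D := by
  set S := Real.sqrt (h ^ 2 + 2 * M * D) with hSdef
  have hS0 : 0 ≤ S := Real.sqrt_nonneg _
  have hS : S ^ 2 = h ^ 2 + 2 * M * D := Real.sq_sqrt (by positivity)
  by_cases hden : h + S = 0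
  · have h0 : h = 0 := by linarith
    have hSz : S = 0 := by linarith
    have hD0 : D = 0 := by nlinarith
    simp [tmin, hD0, h0, ← hSdef, hSz]
  · unfold tmin
    rw [← hSdef]
    field_simp
    linear_combination (-D) * hS

lemma tmin_sq {M D h : ℝ} (hM : 0 < M) (hD : 0 ≤ D) (hh : 0 ≤ h) :
    M * (tmin M D h) ^ 2 ≤ 2 * D := by
  have h1 := tmin_eq hM hD hh
  have h2 := tmin_nonneg (M := M) hD hh
  nlinarith [mul_nonneg hh h2]

lemma q_min {M D h : ℝ} (hM : 0 < M) (hD : 0 ≤ D) (hh : 0 ≤ h) (t : ℝ) (ht : 0 ≤ t) :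
    -D * tmin M D h + h / 2 * (tmin M D h) ^ 2 + M / 6 * (tmin M D h) ^ 3 ≤
      -D * t + h / 2 * t ^ 2 + M / 6 * t ^ 3 := by
  have h1 := tmin_eq hM hD hh
  have h2 := tmin_nonneg (M := M) hD hh
  set s := tmin M D h
  nlinarith [sq_nonneg (t - s), mul_nonneg hh (sq_nonneg (t - s)),
    mul_nonneg (mul_nonneg hM.le ht) (sq_nonneg (t - s)),
    mul_nonneg (mul_nonneg hM.le h2) (sq_nonneg (t - s))]


lemma sqrt_free_le {x y : ℝ} (hx : 0 ≤ x) (hy : 0 ≤ y) (h : x ^ 2 ≤ y ^ 2) : x ≤ y := by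
  nlinarith [sq_nonneg (x - y), sq_nonneg (x + y)]

lemma help_sq {M r T a b : ℝ} (hM : 0 < M) (hr : 0 < r) (hT : 0 ≤ T)
    (ha0 : 0 ≤ a) (hb0 : 0 ≤ b) (hdd : a ≤ M * r ^ 2 / 6) (hdh : b ≤ M * r / 3) :
    (a + b * T) ^ 2 ≤ M ^ 2 * r ^ 4 / 18 + 2 / 9 * M ^ 2 * r ^ 2 * T ^ 2 := by
  nlinarith [sq_nonneg (a - b * T), mul_le_mul hdd hdd ha0 (by positivity),
    mul_le_mul_of_nonneg_right
      (mul_le_mul hdh hdh hb0 (by positivity : (0:ℝ) ≤ M * r / 3)) (sq_nonneg T),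
    mul_nonneg hb0 hT]

set_option maxHeartbeats 2000000 in
lemma abstract_bound (M R r B D h₀ Dr hr' : ℝ) (hM : 0 < M) (hr : 0 < r) (hrR : r ≤ R)
    (hB1 : M * R ^ 3 ≤ B) (hD2 : D ^ 2 * R ^ 2 ≤ 2 * B ^ 2)
    (hh₀ : 0 ≤ h₀) (hhr : 0 ≤ hr') (hD : 0 ≤ D) (hDr : 0 ≤ Dr)
    (hdd : |Dr - D| ≤ M * r ^ 2 / 6) (hdh : |hr' - h₀| ≤ M * r / 3) :
    (-D * tmin M Dr hr' + h₀ / 2 * (tmin M Dr hr') ^ 2 + M / 6 * (tmin M Dr hr') ^ 3) -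
      (-D * tmin M D h₀ + h₀ / 2 * (tmin M D h₀) ^ 2 + M / 6 * (tmin M D h₀) ^ 3) ≤
      2 * B / R ^ 2 * r ^ 2 := by
  have hR : 0 < R := lt_of_lt_of_le hr hrR
  have hB : 0 < B := lt_of_lt_of_le (by positivity) hB1
  set t₁ := tmin M D h₀ with ht₁def
  set t₂ := tmin M Dr hr' with ht₂def
  have ht₁ : 0 ≤ t₁ := tmin_nonneg hD hh₀
  have ht₂ : 0 ≤ t₂ := tmin_nonneg hDr hhr
  have e₁ : M / 2 * t₁ ^ 2 + h₀ * t₁ = D := tmin_eq hM hD hh₀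
  have e₂ : M / 2 * t₂ ^ 2 + hr' * t₂ = Dr := tmin_eq hM hDr hhr
  set T := max t₂ t₁ with hTdef
  have hT0 : 0 ≤ T := le_trans ht₂ (le_max_left _ _)
  have ht₂T : t₂ ≤ T := le_max_left _ _
  have ht₁T : t₁ ≤ T := le_max_right _ _
  have hTsum : T ≤ t₂ + t₁ := by
    rcases max_cases t₂ t₁ with ⟨h1, h2⟩ | ⟨h1, h2⟩ <;> rw [hTdef, h1] <;> linarith
  set a := |Dr - D| with hadef
  set b := |hr' - h₀| with hbdef
  have ha0 : 0 ≤ a := abs_nonneg _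
  have hb0 : 0 ≤ b := abs_nonneg _
  set s := |t₂ - t₁| with hsdef
  have hs0 : 0 ≤ s := abs_nonneg _
  clear_value t₁ t₂ T a b s
  have hsT : s ≤ T := by
    rw [hsdef]
    rcases abs_cases (t₂ - t₁) with ⟨h1, _⟩ | ⟨h1, _⟩ <;> rw [h1] <;> linarith
  -- step 1: q-difference bounded by perturbation expression
  have step1 : (-D * t₂ + h₀ / 2 * t₂ ^ 2 + M / 6 * t₂ ^ 3) -
      (-D * t₁ + h₀ / 2 * t₁ ^ 2 + M / 6 * t₁ ^ 3) ≤ (a + b * T) * s := by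
    have hq := q_min hM hDr hhr t₁ ht₁
    rw [← ht₂def] at hq
    -- q₀(t₂) - q₀(t₁) ≤ (Dr - D)*(t₂ - t₁) - (hr' - h₀)/2*(t₂² - t₁²)
    have h2 : (-D * t₂ + h₀ / 2 * t₂ ^ 2 + M / 6 * t₂ ^ 3) -
        (-D * t₁ + h₀ / 2 * t₁ ^ 2 + M / 6 * t₁ ^ 3) ≤
        (Dr - D) * (t₂ - t₁) - (hr' - h₀) / 2 * (t₂ ^ 2 - t₁ ^ 2) := by linarith only [hq]
    have h3 : (Dr - D) * (t₂ - t₁) - (hr' - h₀) / 2 * (t₂ ^ 2 - t₁ ^ 2) ≤ (a + b * T) * s := by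
      have h4 : (Dr - D) * (t₂ - t₁) - (hr' - h₀) / 2 * (t₂ ^ 2 - t₁ ^ 2) ≤
          |(Dr - D) * (t₂ - t₁) - (hr' - h₀) / 2 * (t₂ ^ 2 - t₁ ^ 2)| := le_abs_self _
      have h5 : |(Dr - D) * (t₂ - t₁) - (hr' - h₀) / 2 * (t₂ ^ 2 - t₁ ^ 2)| ≤
          |(Dr - D) * (t₂ - t₁)| + |(hr' - h₀) / 2 * (t₂ ^ 2 - t₁ ^ 2)| := abs_sub _ _
      have h6 : |(Dr - D) * (t₂ - t₁)| = a * s := by rw [abs_mul, ← hadef, ← hsdef]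
      have h7 : |(hr' - h₀) / 2 * (t₂ ^ 2 - t₁ ^ 2)| = b / 2 * (s * (t₂ + t₁)) := by
        rw [hbdef, hsdef, show t₂ ^ 2 - t₁ ^ 2 = (t₂ - t₁) * (t₂ + t₁) from by ring,
          abs_mul, abs_mul, abs_div, abs_two,
          abs_of_nonneg (by linarith : (0:ℝ) ≤ t₂ + t₁)]
      have h8 : b / 2 * (s * (t₂ + t₁)) ≤ b * s * T := by
        have := mul_le_mul_of_nonneg_left (show t₂ + t₁ ≤ 2 * T by
            linarith only [ht₂T, ht₁T]) (by positivity : (0:ℝ) ≤ b / 2 * s)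
        linarith only [this]
      calc (Dr - D) * (t₂ - t₁) - (hr' - h₀) / 2 * (t₂ ^ 2 - t₁ ^ 2) ≤ _ := h4
        _ ≤ _ := h5
        _ = a * s + b / 2 * (s * (t₂ + t₁)) := by rw [h6, h7]
        _ ≤ a * s + b * s * T := by linarith only [h8]
        _ = (a + b * T) * s := by ring
    linarith only [h2, h3]
  -- bounds
  have hsmall : ∀ X, X ≤ (a + b * T) * s → T ≤ r → X ≤ 2 * B / R ^ 2 * r ^ 2 := by
    intro X hX hTr
    have h1 : (a + b * T) * s ≤ (M * r ^ 2 / 6 + M * r / 3 * r) * r := by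
      apply mul_le_mul _ (le_trans hsT hTr) hs0 (by positivity)
      have : b * T ≤ M * r / 3 * r := by
        apply mul_le_mul hdh hTr hT0 (by positivity)
      linarith
    have h2 : (M * r ^ 2 / 6 + M * r / 3 * r) * r = M * r ^ 3 / 2 := by ring
    rw [div_mul_eq_mul_div, le_div_iff₀ (by positivity : (0:ℝ) < R ^ 2)]
    have hA : M * r ^ 3 * R ^ 2 ≤ M * R ^ 3 * r ^ 2 := by
      have h5 := mul_le_mul_of_nonneg_left hrR (by positivity : (0:ℝ) ≤ M * r ^ 2 * R ^ 2)
      nlinarith only [h5]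
    have h3 : M * r ^ 3 / 2 * R ^ 2 ≤ 2 * B * r ^ 2 := by
      have h6 := mul_le_mul_of_nonneg_right hB1 (by positivity : (0:ℝ) ≤ r ^ 2)
      have h7 : 0 < B * r ^ 2 := by positivity
      linarith only [hA, h6, h7]
    have hXb : X ≤ M * r ^ 3 / 2 := by linarith only [hX, h1, h2]
    have h9 := mul_le_mul_of_nonneg_right hXb (by positivity : (0:ℝ) ≤ R ^ 2)
    linarith only [h9, h3]
  rcases le_or_gt T r with hTr | hTr
  · exact hsmall _ step1 hTr
  -- big case : T > r
  have hTpos : 0 < T := lt_trans hr hTr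
  -- identity
  have hI : (t₂ - t₁) * (h₀ + M / 2 * (t₂ + t₁)) = (Dr - D) - (hr' - h₀) * t₂ := by
    linear_combination e₂ - e₁
  have hN0 : 0 ≤ h₀ + M / 2 * (t₂ + t₁) := by positivity
  have hsN : s * (h₀ + M / 2 * (t₂ + t₁)) = |(Dr - D) - (hr' - h₀) * t₂| := by
    rw [← hI, abs_mul, abs_of_nonneg hN0, hsdef]
  have hsN' : s * (h₀ + M / 2 * (t₂ + t₁)) ≤ a + b * T := by
    rw [hsN]
    calc |(Dr - D) - (hr' - h₀) * t₂| ≤ |Dr - D| + |(hr' - h₀) * t₂| := abs_sub _ _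
      _ = a + b * t₂ := by rw [abs_mul, abs_of_nonneg ht₂, ← hadef, ← hbdef]
      _ ≤ a + b * T := by linarith only [mul_le_mul_of_nonneg_left ht₂T hb0]
  have hNT : M / 2 * T ≤ h₀ + M / 2 * (t₂ + t₁) := by
    linarith only [hh₀, mul_le_mul_of_nonneg_left hTsum (by positivity : (0:ℝ) ≤ M / 2)]
  have hsMT : s * (M / 2 * T) ≤ a + b * T := by
    calc s * (M / 2 * T) ≤ s * (h₀ + M / 2 * (t₂ + t₁)) :=
          mul_le_mul_of_nonneg_left hNT hs0
      _ ≤ a + b * T := hsN'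
  -- hEN : qdiff * (M/2*T) ≤ (a+bT)^2, via step1
  set X := (-D * t₂ + h₀ / 2 * t₂ ^ 2 + M / 6 * t₂ ^ 3) -
      (-D * t₁ + h₀ / 2 * t₁ ^ 2 + M / 6 * t₁ ^ 3) with hXdef
  have hab0 : 0 ≤ a + b * T := by positivity
  have hEN : X * (M / 2 * T) ≤ (a + b * T) ^ 2 := by
    calc X * (M / 2 * T) ≤ (a + b * T) * s * (M / 2 * T) := by
          apply mul_le_mul_of_nonneg_right step1 (by positivity)
      _ = (a + b * T) * (s * (M / 2 * T)) := by ring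
      _ ≤ (a + b * T) * (a + b * T) := mul_le_mul_of_nonneg_left hsMT hab0
      _ = (a + b * T) ^ 2 := by ring
  -- (a+bT)² ≤ M²r⁴/18 + 2/9 M²r²T²
  have hsq : (a + b * T) ^ 2 ≤ M ^ 2 * r ^ 4 / 18 + 2 / 9 * M ^ 2 * r ^ 2 * T ^ 2 :=
    help_sq hM hr hT0 ha0 hb0 hdd hdh
  -- MT² ≤ 2D + Mr²/3
  have hMT2 : M * T ^ 2 ≤ 2 * D + M * r ^ 2 / 3 := by
    have h1 := tmin_sq hM hD hh₀
    have h2 := tmin_sq hM hDr hhr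
    rw [← ht₁def] at h1; rw [← ht₂def] at h2
    have hDrD : Dr ≤ D + M * r ^ 2 / 6 := by
      have h' := hdd
      rw [hadef] at h'
      linarith [(abs_le.mp h').2]
    rcases max_cases t₂ t₁ with ⟨hmx, _⟩ | ⟨hmx, _⟩ <;> rw [hTdef, hmx] <;>
      linarith only [h1, h2, hDrD, (by positivity : (0:ℝ) ≤ M * r ^ 2)]
  -- MDR⁴ ≤ 3/2 B²
  have hMD : M * D * R ^ 4 ≤ 3 / 2 * B ^ 2 := by
    have h1 : (M * D * R ^ 4) ^ 2 ≤ 2 * B ^ 4 := by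
      calc (M * D * R ^ 4) ^ 2 = (M * R ^ 3) ^ 2 * (D ^ 2 * R ^ 2) := by ring
        _ ≤ B ^ 2 * (2 * B ^ 2) := by
            apply mul_le_mul _ hD2 (by positivity) (by positivity)
            have := mul_le_mul hB1 hB1 (by positivity : (0:ℝ) ≤ M * R ^ 3) hB.le
            linarith only [this]
        _ = 2 * B ^ 4 := by ring
    apply sqrt_free_le (by positivity) (by positivity)
    nlinarith only [h1, pow_pos hB 4]
  -- MTR² ≤ 2B
  have hMTR : M * T * R ^ 2 ≤ 2 * B := by
    have h1 : (M * T * R ^ 2) ^ 2 ≤ 4 * B ^ 2 := by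
      have h2 : (M * T * R ^ 2) ^ 2 = (M * T ^ 2) * (M * R ^ 4) := by ring
      have h3 : M * r ^ 2 / 3 * (M * R ^ 4) ≤ B ^ 2 / 3 := by
        have hr2 : r ^ 2 ≤ R ^ 2 := by nlinarith only [hr, hrR]
        have h3a := mul_le_mul_of_nonneg_left hr2 (by positivity : (0:ℝ) ≤ M * M * R ^ 4 / 3)
        have h3b := mul_le_mul hB1 hB1 (by positivity : (0:ℝ) ≤ M * R ^ 3) hB.le
        linarith only [h3a, h3b]
      have h5 : (M * T ^ 2) * (M * R ^ 4) ≤ (2 * D + M * r ^ 2 / 3) * (M * R ^ 4) :=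
        mul_le_mul_of_nonneg_right hMT2 (by positivity)
      have h6 : (2 * D + M * r ^ 2 / 3) * (M * R ^ 4) = 2 * (M * D * R ^ 4) + M * r ^ 2 / 3 * (M * R ^ 4) := by ring
      linarith only [h2.le, h5, h3, hMD, h2.ge, sq_nonneg B]
    apply sqrt_free_le (by positivity) (by positivity)
    linarith only [h1, sq_nonneg B]
  -- assemble
  have hfin : (M ^ 2 * r ^ 4 / 18 + 2 / 9 * M ^ 2 * r ^ 2 * T ^ 2) * R ^ 2 ≤
      B * M * T * r ^ 2 := by
    have hterm1 : M ^ 2 * r ^ 4 * R ^ 2 ≤ B * (M * r ^ 2 * T) := by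
      have h2 : M * r * R ^ 2 ≤ B := by
        have := mul_le_mul_of_nonneg_left hrR (by positivity : (0:ℝ) ≤ M * R ^ 2)
        linarith only [this, hB1]
      have h3 : M * r ^ 3 ≤ M * r ^ 2 * T := by
        have := mul_le_mul_of_nonneg_left hTr.le (by positivity : (0:ℝ) ≤ M * r ^ 2)
        linarith only [this]
      calc M ^ 2 * r ^ 4 * R ^ 2 = (M * r * R ^ 2) * (M * r ^ 3) := by ring
        _ ≤ B * (M * r ^ 2 * T) := mul_le_mul h2 h3 (by positivity) hB.le
    have hterm2 : M ^ 2 * r ^ 2 * T ^ 2 * R ^ 2 ≤ 2 * B * (M * T * r ^ 2) := by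
      have h2 : 0 ≤ M * T * r ^ 2 := by positivity
      have h4 := mul_le_mul_of_nonneg_right hMTR h2
      linarith only [h4]
    linarith only [hterm1, hterm2, mul_nonneg (mul_nonneg (mul_nonneg hB.le hM.le) hT0) (sq_nonneg r)]
  -- conclude : X ≤ 2B/R² r²
  rw [div_mul_eq_mul_div, le_div_iff₀ (by positivity : (0:ℝ) < R ^ 2)]
  have hMThalf : 0 < M / 2 * T := by positivity
  have key : X * R ^ 2 * (M / 2 * T) ≤ 2 * B * r ^ 2 * (M / 2 * T) := by
    calc X * R ^ 2 * (M / 2 * T) = X * (M / 2 * T) * R ^ 2 := by ring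
      _ ≤ (a + b * T) ^ 2 * R ^ 2 := by
          apply mul_le_mul_of_nonneg_right hEN (by positivity)
      _ ≤ (M ^ 2 * r ^ 4 / 18 + 2 / 9 * M ^ 2 * r ^ 2 * T ^ 2) * R ^ 2 := by
          apply mul_le_mul_of_nonneg_right hsq (by positivity)
      _ ≤ B * M * T * r ^ 2 := hfin
      _ ≤ 2 * B * r ^ 2 * (M / 2 * T) := le_of_eq (by ring)
  exact le_of_mul_le_mul_right key hMThalf

lemma taylor_upper (g g' g'' : ℝ → ℝ)
    (hg : ∀ t, HasDerivAt g (g' t) t) (hg' : ∀ t, HasDerivAt g' (g'' t) t)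
    (K c r : ℝ) (hr : 0 ≤ r) (hb : ∀ t ∈ Set.Icc (0:ℝ) r, g'' t ≤ K + c * t) :
    g r ≤ g 0 + g' 0 * r + K * r ^ 2 / 2 + c * r ^ 3 / 6 := by
  set p' : ℝ → ℝ := fun t => g' 0 + K * t + c * t ^ 2 / 2 - g' t with hp'def
  set p : ℝ → ℝ := fun t => g 0 + g' 0 * t + K * t ^ 2 / 2 + c * t ^ 3 / 6 - g t with hpdef
  have hpoly1 : ∀ t : ℝ, HasDerivAt (fun t : ℝ => g' 0 + K * t + c * t ^ 2 / 2)
      (K + c * t) t := by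
    intro t
    have h1 : HasDerivAt (fun t : ℝ => K * t) K t := by
      simpa using (hasDerivAt_id t).const_mul K
    have h2 : HasDerivAt (fun t : ℝ => c * t ^ 2 / 2) (c * t) t := by
      have := ((hasDerivAt_pow 2 t).const_mul c).div_const 2
      simpa using this.congr_deriv (by ring)
    exact (((hasDerivAt_const t (g' 0)).add h1).add h2).congr_deriv (by ring)
  have hp' : ∀ t : ℝ, HasDerivAt p' (K + c * t - g'' t) t := by
    intro t
    exact (hpoly1 t).sub (hg' t)
  have hpoly2 : ∀ t : ℝ, HasDerivAt
      (fun t : ℝ => g 0 + g' 0 * t + K * t ^ 2 / 2 + c * t ^ 3 / 6) (p' t + g' t) t := by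
    intro t
    have h1 : HasDerivAt (fun t : ℝ => g' 0 * t) (g' 0) t := by
      simpa using (hasDerivAt_id t).const_mul (g' 0)
    have h2 : HasDerivAt (fun t : ℝ => K * t ^ 2 / 2) (K * t) t := by
      have := ((hasDerivAt_pow 2 t).const_mul K).div_const 2
      simpa using this.congr_deriv (by ring)
    have h3 : HasDerivAt (fun t : ℝ => c * t ^ 3 / 6) (c * t ^ 2 / 2) t := by
      have := ((hasDerivAt_pow 3 t).const_mul c).div_const 6
      simpa using this.congr_deriv (by ring)
    have h4 := (((hasDerivAt_const t (g 0)).add h1).add h2).add h3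
    exact h4.congr_deriv (by rw [hp'def]; ring)
  have hp : ∀ t : ℝ, HasDerivAt p (p' t) t := by
    intro t
    have := (hpoly2 t).sub (hg t)
    exact this.congr_deriv (by ring)
  -- p' monotone on [0,r]
  have m1 : MonotoneOn p' (Set.Icc 0 r) := by
    apply monotoneOn_of_deriv_nonneg (convex_Icc 0 r)
    · exact fun t _ => (hp' t).continuousAt.continuousWithinAt
    · intro t ht
      exact ((hp' t).differentiableAt).differentiableWithinAt
    · intro t ht
      rw [interior_Icc] at ht
      rw [(hp' t).deriv]
      have := hb t (Set.mem_Icc.mpr ⟨ht.1.le, ht.2.le⟩)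
      linarith
  have hp'0 : p' 0 = 0 := by simp [hp'def]
  have hp'nonneg : ∀ t ∈ Set.Icc (0:ℝ) r, 0 ≤ p' t := by
    intro t ht
    have := m1 (Set.left_mem_Icc.mpr hr) ht ht.1
    rw [hp'0] at this
    exact this
  have m2 : MonotoneOn p (Set.Icc 0 r) := by
    apply monotoneOn_of_deriv_nonneg (convex_Icc 0 r)
    · exact fun t _ => (hp t).continuousAt.continuousWithinAt
    · intro t ht
      exact ((hp t).differentiableAt).differentiableWithinAt
    · intro t ht
      rw [interior_Icc] at ht
      rw [(hp t).deriv]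
      exact hp'nonneg t (Set.mem_Icc.mpr ⟨ht.1.le, ht.2.le⟩)
  have hp0 : p 0 = 0 := by simp [hpdef]
  have := m2 (Set.left_mem_Icc.mpr hr) (Set.right_mem_Icc.mpr hr) hr
  rw [hp0] at this
  simp only [hpdef] at this
  linarith

/-- reflected derivative data -/
lemma reflect_deriv (g g' : ℝ → ℝ) (hg : ∀ t, HasDerivAt g (g' t) t) :
    ∀ t, HasDerivAt (fun t => g (-t)) (-(g' (-t))) t := by
  intro t
  have h1 : HasDerivAt (fun t : ℝ => -t) (-1 : ℝ) t := (hasDerivAt_id t).neg.congr_deriv (by ring)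
  have := (hg (-t)).comp t h1
  exact this.congr_deriv (by ring)

/-- Quadratic upper bound from a bound on the second derivative, all `α`. -/
lemma taylor_quad (g g' g'' : ℝ → ℝ)
    (hg : ∀ t, HasDerivAt g (g' t) t) (hg' : ∀ t, HasDerivAt g' (g'' t) t)
    (L : ℝ) (hb : ∀ t, g'' t ≤ L) (α : ℝ) :
    g α ≤ g 0 + g' 0 * α + L * α ^ 2 / 2 := by
  rcases le_or_gt 0 α with hα | hα
  · have := taylor_upper g g' g'' hg hg' L 0 α hα (fun t _ => by linarith [hb t])
    simpa using by linarith [this]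
  · -- reflect
    have hG : ∀ t, HasDerivAt (fun t => g (-t)) (-(g' (-t))) t := reflect_deriv g g' hg
    have hG' : ∀ t, HasDerivAt (fun t => -(g' (-t))) (g'' (-t)) t := by
      intro t
      have := (reflect_deriv g' g'' hg' t).neg
      exact this.congr_deriv (neg_neg _)
    have := taylor_upper (fun t => g (-t)) (fun t => -(g' (-t))) (fun t => g'' (-t))
      hG hG' L 0 (-α) (by linarith) (fun t _ => by linarith [hb (-t)])
    simp only [neg_neg, neg_zero] at this
    calc g α ≤ g 0 + -(g' 0) * (-α) + L * (-α) ^ 2 / 2 + 0 * (-α) ^ 3 / 6 := by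
          simpa using this
      _ = g 0 + g' 0 * α + L * α ^ 2 / 2 := by ring

/-- Cubic Taylor estimate from Lipschitz-type bound on second derivative, `r ≥ 0`. -/
lemma taylor_cubic_nonneg (g g' g'' : ℝ → ℝ)
    (hg : ∀ t, HasDerivAt g (g' t) t) (hg' : ∀ t, HasDerivAt g' (g'' t) t)
    (c : ℝ) (hb : ∀ t, |g'' t - g'' 0| ≤ c * |t|) (r : ℝ) (hr : 0 ≤ r) :
    |g r - g 0 - g' 0 * r - g'' 0 * r ^ 2 / 2| ≤ c * r ^ 3 / 6 := by
  have hup : g r ≤ g 0 + g' 0 * r + g'' 0 * r ^ 2 / 2 + c * r ^ 3 / 6 := by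
    apply taylor_upper g g' g'' hg hg' (g'' 0) c r hr
    intro t ht
    have := (abs_le.mp (hb t)).2
    rw [abs_of_nonneg ht.1] at this
    linarith
  have hlo : -(g r) ≤ -(g 0) + -(g' 0) * r + -(g'' 0) * r ^ 2 / 2 + c * r ^ 3 / 6 := by
    apply taylor_upper (fun t => -(g t)) (fun t => -(g' t)) (fun t => -(g'' t))
      (fun t => (hg t).neg) (fun t => (hg' t).neg) (-(g'' 0)) c r hr
    intro t ht
    have := (abs_le.mp (hb t)).1
    rw [abs_of_nonneg ht.1] at this
    linarith
  rw [abs_le]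
  constructor <;> linarith

/-- Cubic Taylor estimate, all `r`. -/
lemma taylor_cubic (g g' g'' : ℝ → ℝ)
    (hg : ∀ t, HasDerivAt g (g' t) t) (hg' : ∀ t, HasDerivAt g' (g'' t) t)
    (c : ℝ) (hb : ∀ t, |g'' t - g'' 0| ≤ c * |t|) (r : ℝ) :
    |g r - g 0 - g' 0 * r - g'' 0 * r ^ 2 / 2| ≤ c * |r| ^ 3 / 6 := by
  rcases le_or_gt 0 r with hr | hr
  · rw [abs_of_nonneg hr]
    exact taylor_cubic_nonneg g g' g'' hg hg' c hb r hr
  · have hG : ∀ t, HasDerivAt (fun t => g (-t)) (-(g' (-t))) t := reflect_deriv g g' hg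
    have hG' : ∀ t, HasDerivAt (fun t => -(g' (-t))) (g'' (-t)) t := by
      intro t
      exact (reflect_deriv g' g'' hg' t).neg.congr_deriv (neg_neg _)
    have hb' : ∀ t : ℝ, |g'' (-t) - g'' (-(0:ℝ))| ≤ c * |t| := by
      intro t
      simpa [abs_neg] using hb (-t)
    have := taylor_cubic_nonneg (fun t => g (-t)) (fun t => -(g' (-t))) (fun t => g'' (-t))
      hG hG' c hb' (-r) (by linarith)
    rw [abs_of_neg hr]
    simp only [neg_neg, neg_zero] at this
    calc |g r - g 0 - g' 0 * r - g'' 0 * r ^ 2 / 2|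
        = |g r - g 0 - -(g' 0) * (-r) - g'' 0 * (-r) ^ 2 / 2| := by ring_nf
      _ ≤ c * (-r) ^ 3 / 6 := this
      _ = c * (-r) ^ 3 / 6 := rfl
lemma cubicMin_abs (M d h : ℝ) (hh : 0 ≤ h) : |cubicMin M d h| = tmin M |d| h := by
  unfold cubicMin tmin
  have hden : 0 ≤ h + Real.sqrt (h ^ 2 + 2 * M * |d|) := by positivity
  rw [abs_div, abs_of_nonneg hden]
  congr 1
  rw [show (-2 : ℝ) * d = -(2 * d) from by ring, abs_neg, abs_mul, abs_two]

lemma cubicMin_mul_nonpos (M d h : ℝ) (hh : 0 ≤ h) : d * cubicMin M d h ≤ 0 := by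
  unfold cubicMin
  have hden : 0 ≤ h + Real.sqrt (h ^ 2 + 2 * M * |d|) := by positivity
  rw [show d * (-2 * d / (h + Real.sqrt (h ^ 2 + 2 * M * |d|))) =
    -(2 * d ^ 2 / (h + Real.sqrt (h ^ 2 + 2 * M * |d|))) from by ring]
  have : 0 ≤ 2 * d ^ 2 / (h + Real.sqrt (h ^ 2 + 2 * M * |d|)) := by positivity
  linarith

lemma cubicModel_eq_q (M d h α : ℝ) (hsign : d * α ≤ 0) :
    cubicModel M d h α = -|d| * |α| + h / 2 * |α| ^ 2 + M / 6 * |α| ^ 3 := by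
  unfold cubicModel
  have h1 : d * α = -(|d| * |α|) := by
    rw [← abs_mul]
    linarith [abs_of_nonpos hsign]
  rw [h1, sq_abs]
  ring

set_option maxHeartbeats 2000000 in
/-- (Finite-difference error bound for the minimum of the cubic model.)
For convex, `L`-smooth `f` with `M`-Lipschitz Hessian attaining its minimum `f⋆`, a unit vector
`u`, `0 < r ≤ R`, `B = max(LR², MR³, f(x) − f⋆)`, `d₀ = uᵀ∇f(x)`, `h₀ = uᵀ∇²f(x)u`,
`P(α) = d₀α + (h₀/2)α² + (M/6)|α|³` with global minimizer `α̂ = φ(d₀, h₀)`, and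
`α⁺ = φ(d_r, h_r)`, `α⁻ = φ(−d_r, h_r)`, one has
`min(|P(α̂) − P(α⁺)|, |P(α̂) − P(α⁻)|) ≤ (2B/R²)·r²`. -/
theorem cubic_model_finite_difference_error (n : ℕ)
    (f : EuclideanSpace ℝ (Fin n) → ℝ)
    (hconv : ConvexOn ℝ Set.univ f) (hf : ContDiff ℝ 2 f)
    (fstar : ℝ) (hmin : ∀ y, fstar ≤ f y) (hattain : ∃ y, f y = fstar)
    (L M : ℝ) (hL : 0 < L) (hM : 0 < M)
    (hsmooth : ∀ y v : EuclideanSpace ℝ (Fin n),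
      iteratedFDeriv ℝ 2 f y ![v, v] ≤ L * ‖v‖ ^ 2)
    (hlip : ∀ y z v : EuclideanSpace ℝ (Fin n),
      |iteratedFDeriv ℝ 2 f y ![v, v] - iteratedFDeriv ℝ 2 f z ![v, v]| ≤
        M * ‖y - z‖ * ‖v‖ ^ 2)
    (x u : EuclideanSpace ℝ (Fin n)) (hu : ‖u‖ = 1)
    (R : ℝ) (hR : 0 < R)
    (B : ℝ) (hB : B = max (max (L * R ^ 2) (M * R ^ 3)) (f x - fstar))
    (r : ℝ) (hr0 : 0 < r) (hrR : r ≤ R)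
    (d₀ h₀ : ℝ) (hd₀ : d₀ = ⟪gradient f x, u⟫) (hh₀ : h₀ = iteratedFDeriv ℝ 2 f x ![u, u]) :
    min
      |cubicModel M d₀ h₀ (cubicMin M d₀ h₀) -
        cubicModel M d₀ h₀ (cubicMin M (centralD f x u r) (centralH f x u r))|
      |cubicModel M d₀ h₀ (cubicMin M d₀ h₀) -
        cubicModel M d₀ h₀ (cubicMin M (-(centralD f x u r)) (centralH f x u r))| ≤
      2 * B / R ^ 2 * r ^ 2 := by
  -- the restriction of `f` to the line `t ↦ x + t • u` and its derivatives
  obtain ⟨g, hgdef⟩ : ∃ g : ℝ → ℝ, g = fun t => f (x + t • u) := ⟨_, rfl⟩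
  obtain ⟨g', hg'def⟩ : ∃ g' : ℝ → ℝ, g' = fun t => fderiv ℝ f (x + t • u) u := ⟨_, rfl⟩
  obtain ⟨g'', hg''def⟩ : ∃ g'' : ℝ → ℝ,
      g'' = fun t => iteratedFDeriv ℝ 2 f (x + t • u) ![u, u] := ⟨_, rfl⟩
  have hγ : ∀ t : ℝ, HasDerivAt (fun t : ℝ => x + t • u) u t := by
    intro t
    simpa using ((hasDerivAt_id t).smul_const u).const_add x
  have hfd : Differentiable ℝ f := hf.differentiable (by norm_num)
  have hgd : ∀ t, HasDerivAt g (g' t) t := by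
    intro t
    rw [hgdef, hg'def]
    exact (hfd _).hasFDerivAt.comp_hasDerivAt t (hγ t)
  have hFd : Differentiable ℝ (fderiv ℝ f) :=
    (hf.fderiv_right (m := 1) (by norm_num)).differentiable (by norm_num)
  have hg'd : ∀ t, HasDerivAt g' (g'' t) t := by
    intro t
    rw [hg'def, hg''def]
    have h1 : HasDerivAt (fun s : ℝ => fderiv ℝ f (x + s • u))
        (fderiv ℝ (fderiv ℝ f) (x + t • u) u) t :=
      (hFd _).hasFDerivAt.comp_hasDerivAt t (hγ t)
    have h2 : HasDerivAt (fun s : ℝ => fderiv ℝ f (x + s • u) u)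
        (fderiv ℝ (fderiv ℝ f) (x + t • u) u u) t := by
      simpa using h1.clm_apply (hasDerivAt_const t u)
    have h3 : iteratedFDeriv ℝ 2 f (x + t • u) ![u, u] =
        fderiv ℝ (fderiv ℝ f) (x + t • u) u u := by
      rw [iteratedFDeriv_two_apply]
      simp
    rw [← h3] at h2
    exact h2
  -- second derivative bounds along the line
  have hg''L : ∀ t, g'' t ≤ L := by
    intro t
    rw [hg''def]
    simpa [hu] using hsmooth (x + t • u) u
  have hg''lip : ∀ t, |g'' t - g'' 0| ≤ M * |t| := by
    intro t
    rw [hg''def]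
    have := hlip (x + t • u) (x + (0:ℝ) • u) u
    have hnorm : ‖(x + t • u) - (x + (0:ℝ) • u)‖ = |t| := by
      simp [norm_smul, hu]
    rw [hnorm, hu] at this
    simpa using this
  -- basic values
  have hg0 : g 0 = f x := by rw [hgdef]; simp
  have hd0g : d₀ = g' 0 := by
    rw [hd₀, hg'def, gradient, InnerProductSpace.toDual_symm_apply]
    simp
  have hh0g : h₀ = g'' 0 := by
    rw [hh₀, hg''def]
    simp
  -- key finite-difference estimates, for every positive step size
  have hxm : ∀ ρ : ℝ, x - ρ • u = x + (-ρ) • u := by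
    intro ρ
    rw [neg_smul, sub_eq_add_neg]
  have key : ∀ ρ : ℝ, 0 < ρ →
      |centralD f x u ρ - g' 0| ≤ M * ρ ^ 2 / 6 ∧
      |centralH f x u ρ - g'' 0| ≤ M * ρ / 3 ∧ 0 ≤ centralH f x u ρ := by
    intro ρ hρ
    have hgp : f (x + ρ • u) = g ρ := by rw [hgdef]
    have hgm : f (x - ρ • u) = g (-ρ) := by rw [hxm ρ, hgdef]
    have hEp := taylor_cubic g g' g'' hgd hg'd M hg''lip ρ
    rw [abs_of_pos hρ] at hEp
    have hEm := taylor_cubic g g' g'' hgd hg'd M hg''lip (-ρ)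
    rw [abs_neg, abs_of_pos hρ] at hEm
    set Ep := g ρ - g 0 - g' 0 * ρ - g'' 0 * ρ ^ 2 / 2 with hEpdef
    have hEm' : |g (-ρ) - g 0 + g' 0 * ρ - g'' 0 * ρ ^ 2 / 2| ≤ M * ρ ^ 3 / 6 := by
      have : g (-ρ) - g 0 - g' 0 * (-ρ) - g'' 0 * (-ρ) ^ 2 / 2 =
          g (-ρ) - g 0 + g' 0 * ρ - g'' 0 * ρ ^ 2 / 2 := by ring
      rwa [this] at hEm
    set Em := g (-ρ) - g 0 + g' 0 * ρ - g'' 0 * ρ ^ 2 / 2 with hEmdef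
    have hcd : centralD f x u ρ - g' 0 = (Ep - Em) / (2 * ρ) := by
      unfold centralD
      rw [hgp, hgm, hEpdef, hEmdef]
      field_simp
      ring
    have hch : centralH f x u ρ - g'' 0 = (Ep + Em) / ρ ^ 2 := by
      unfold centralH
      rw [hgp, hgm, ← hg0, hEpdef, hEmdef]
      field_simp
      ring
    refine ⟨?_, ?_, ?_⟩
    · rw [hcd, abs_div, abs_of_pos (by positivity : (0:ℝ) < 2 * ρ),
        div_le_iff₀ (by positivity : (0:ℝ) < 2 * ρ)]
      calc |Ep - Em| ≤ |Ep| + |Em| := abs_sub _ _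
        _ ≤ M * ρ ^ 3 / 6 + M * ρ ^ 3 / 6 := add_le_add hEp hEm'
        _ = M * ρ ^ 2 / 6 * (2 * ρ) := by ring
    · rw [hch, abs_div, abs_of_pos (by positivity : (0:ℝ) < ρ ^ 2),
        div_le_iff₀ (by positivity : (0:ℝ) < ρ ^ 2)]
      calc |Ep + Em| ≤ |Ep| + |Em| := abs_add_le _ _
        _ ≤ M * ρ ^ 3 / 6 + M * ρ ^ 3 / 6 := add_le_add hEp hEm'
        _ = M * ρ / 3 * ρ ^ 2 := by ring
    · -- convexity: midpoint
      have hmid := hconv.2 (Set.mem_univ (x + ρ • u)) (Set.mem_univ (x - ρ • u))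
        (by norm_num : (0:ℝ) ≤ 1/2) (by norm_num : (0:ℝ) ≤ 1/2) (by norm_num)
      have hmid2 : (1/2 : ℝ) • (x + ρ • u) + (1/2 : ℝ) • (x - ρ • u) = x := by module
      rw [hmid2] at hmid
      simp only [smul_eq_mul] at hmid
      unfold centralH
      apply div_nonneg _ (by positivity)
      linarith
  -- h₀ is nonnegative
  have hh₀0 : 0 ≤ h₀ := by
    rw [hh0g]
    by_contra hneg
    push_neg at hneg
    have hρpos : 0 < -3 * g'' 0 / (2 * M) := by
      apply div_pos (by linarith) (by linarith)
    obtain ⟨-, k2, k3⟩ := key (-3 * g'' 0 / (2 * M)) hρpos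
    have := (abs_le.mp k2).2
    have hval : M * (-3 * g'' 0 / (2 * M)) / 3 = -(g'' 0) / 2 := by
      field_simp
    rw [hval] at this
    linarith
  -- descent lemma : d₀² ≤ 2L(f x − f⋆)
  have hdesc : d₀ ^ 2 ≤ 2 * L * (f x - fstar) := by
    have hq := taylor_quad g g' g'' hgd hg'd L hg''L (-(g' 0) / L)
    have hlow : fstar ≤ g (-(g' 0) / L) := by rw [hgdef]; exact hmin _
    have hLα : L * (-(g' 0) / L) = -(g' 0) := by
      rw [mul_comm]
      exact div_mul_cancel₀ _ hL.ne'
    set α := -(g' 0) / L with hαdef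
    clear_value α
    have h2 : fstar ≤ g 0 + g' 0 * α + L * α ^ 2 / 2 := le_trans hlow hq
    have h4 : g' 0 * α = -(L * α ^ 2) := by linear_combination α * hLα
    have h5 : (g' 0) ^ 2 = L ^ 2 * α ^ 2 := by linear_combination (g' 0 - L * α) * hLα
    rw [hg0] at h2
    have h6 : L * α ^ 2 / 2 ≤ f x - fstar := by linarith
    have h7 := mul_le_mul_of_nonneg_left h6 (by linarith : (0:ℝ) ≤ 2 * L)
    rw [hd0g]
    nlinarith [h5, h7]
  -- B bounds
  have hLB : L * R ^ 2 ≤ B := hB ▸ le_trans (le_max_left _ _) (le_max_left _ _)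
  have hMB : M * R ^ 3 ≤ B := hB ▸ le_trans (le_max_right _ _) (le_max_left _ _)
  have hΔB : f x - fstar ≤ B := hB ▸ le_max_right _ _
  have hΔ0 : 0 ≤ f x - fstar := by linarith [hmin x]
  have hBpos : 0 < B := lt_of_lt_of_le (by positivity) hMB
  have hD2 : d₀ ^ 2 * R ^ 2 ≤ 2 * B ^ 2 := by
    have h1 := mul_le_mul_of_nonneg_right hdesc (sq_nonneg R)
    have h2 : L * R ^ 2 * (f x - fstar) ≤ B * B := mul_le_mul hLB hΔB hΔ0 hBpos.le
    nlinarith [h1, h2]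
  -- abbreviations
  set dr := centralD f x u r with hdrdef
  set hr' := centralH f x u r with hhrdef
  obtain ⟨k1, k2, k3⟩ := key r hr0
  rw [← hd0g] at k1
  rw [← hh0g] at k2
  have hdd : |(|dr|) - (|d₀|)| ≤ M * r ^ 2 / 6 :=
    le_trans (abs_abs_sub_abs_le_abs_sub _ _) k1
  -- apply the abstract bound
  have main := abstract_bound M R r B (|d₀|) h₀ (|dr|) hr' hM hr0 hrR hMB
    (by rw [sq_abs]; exact hD2) hh₀0 k3 (abs_nonneg _) (abs_nonneg _) hdd k2
  -- rewrite the cubic model values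
  have hval₁ : cubicModel M d₀ h₀ (cubicMin M d₀ h₀) =
      -(|d₀|) * tmin M (|d₀|) h₀ + h₀ / 2 * (tmin M (|d₀|) h₀) ^ 2 +
        M / 6 * (tmin M (|d₀|) h₀) ^ 3 := by
    rw [cubicModel_eq_q M d₀ h₀ _ (cubicMin_mul_nonpos M d₀ h₀ hh₀0),
      cubicMin_abs M d₀ h₀ hh₀0]
  have hqmin := q_min hM (abs_nonneg d₀) hh₀0 (tmin M (|dr|) hr')
    (tmin_nonneg (abs_nonneg dr) k3)
  -- choose the right sign
  have hden : 0 ≤ hr' + Real.sqrt (hr' ^ 2 + 2 * M * |dr|) := by positivity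
  by_cases hsgn : 0 ≤ d₀ * dr
  · -- use α⁺ = cubicMin M dr hr'
    have hs : d₀ * cubicMin M dr hr' ≤ 0 := by
      unfold cubicMin
      rw [show d₀ * (-2 * dr / (hr' + Real.sqrt (hr' ^ 2 + 2 * M * |dr|))) =
        -(2 * (d₀ * dr) / (hr' + Real.sqrt (hr' ^ 2 + 2 * M * |dr|))) from by ring]
      have : 0 ≤ 2 * (d₀ * dr) / (hr' + Real.sqrt (hr' ^ 2 + 2 * M * |dr|)) :=
        div_nonneg (by linarith) hden
      linarith
    have hval₂ : cubicModel M d₀ h₀ (cubicMin M dr hr') =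
        -(|d₀|) * tmin M (|dr|) hr' + h₀ / 2 * (tmin M (|dr|) hr') ^ 2 +
          M / 6 * (tmin M (|dr|) hr') ^ 3 := by
      rw [cubicModel_eq_q M d₀ h₀ _ hs, cubicMin_abs M dr hr' k3]
    have hle : cubicModel M d₀ h₀ (cubicMin M d₀ h₀) ≤ cubicModel M d₀ h₀ (cubicMin M dr hr') := by
      rw [hval₁, hval₂]
      exact hqmin
    apply le_trans (min_le_left _ _)
    rw [abs_sub_comm, abs_of_nonneg (sub_nonneg.2 hle), hval₁, hval₂]
    linarith [main]
  · -- use α⁻ = cubicMin M (−dr) hr'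
    push_neg at hsgn
    have hs : d₀ * cubicMin M (-dr) hr' ≤ 0 := by
      unfold cubicMin
      rw [abs_neg]
      rw [show d₀ * (-2 * -dr / (hr' + Real.sqrt (hr' ^ 2 + 2 * M * |dr|))) =
        2 * (d₀ * dr) / (hr' + Real.sqrt (hr' ^ 2 + 2 * M * |dr|)) from by ring]
      apply div_nonpos_of_nonpos_of_nonneg (by linarith) hden
    have habs : |cubicMin M (-dr) hr'| = tmin M (|dr|) hr' := by
      rw [cubicMin_abs M (-dr) hr' k3, abs_neg]
    have hval₂ : cubicModel M d₀ h₀ (cubicMin M (-dr) hr') =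
        -(|d₀|) * tmin M (|dr|) hr' + h₀ / 2 * (tmin M (|dr|) hr') ^ 2 +
          M / 6 * (tmin M (|dr|) hr') ^ 3 := by
      rw [cubicModel_eq_q M d₀ h₀ _ hs, habs]
    have hle : cubicModel M d₀ h₀ (cubicMin M d₀ h₀) ≤
        cubicModel M d₀ h₀ (cubicMin M (-dr) hr') := by
      rw [hval₁, hval₂]
      exact hqmin
    apply le_trans (min_le_right _ _)
    rw [abs_sub_comm, abs_of_nonneg (sub_nonneg.2 hle), hval₁, hval₂]
    linarith [main]
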